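/- Let ν ∈ (−1,∞)^d. The measure μ_ν on (0,∞)^d with density x₁^{2ν₁+1}···x_d^{2ν_d+1} dx is doubling with respect to the Euclidean metric: there exists C > 0 such that μ_ν(B(x,2r)) ≤ C·μ_ν(B(x,r)) for all x ∈ (0,∞)^d and r > 0. -/

import Mathlib

open MeasureTheory Set

/-- The measure on the positive orthant of `ℝ^d` with density `∏ x_i^(2ν_i+1) dx`. -/
noncomputable def besselMeasureD (d : ℕ) (ν : Fin d → ℝ) :
    Measure (EuclideanSpace ℝ (Fin d)) :=
  (volume.restrict {x : EuclideanSpace ℝ (Fin d) | ∀ i, 0 < x i}).withDensity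
    fun x => ENNReal.ofReal (∏ i, (x i) ^ (2 * ν i + 1))

namespace BesselDoubling

variable {d : ℕ}



noncomputable def mass (β t s : ℝ) : ℝ := (t + s) ^ β - max (t - s) 0 ^ β

lemma rpow_sub_le {β p q M : ℝ} (hβ : 0 < β) (hp : 0 < p) (hpq : p ≤ q)
    (hM : ∀ u ∈ Icc p q, u ^ (β - 1) ≤ M) :
    q ^ β - p ^ β ≤ β * ((q - p) * M) := by
  have h1 : ∫ u in p..q, u ^ (β - 1) = (q ^ β - p ^ β) / β := by
    rw [integral_rpow (Or.inl (by linarith))]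
    norm_num
  have h2 : ∫ u in p..q, u ^ (β - 1) ≤ ∫ _u in p..q, M :=
    intervalIntegral.integral_mono_on hpq
      (intervalIntegral.intervalIntegrable_rpow' (by linarith))
      intervalIntegrable_const hM
  rw [intervalIntegral.integral_const, smul_eq_mul] at h2
  rw [h1, div_le_iff₀ hβ] at h2
  linarith [h2]

lemma le_rpow_sub {β p q M : ℝ} (hβ : 0 < β) (hp : 0 < p) (hpq : p ≤ q)
    (hM : ∀ u ∈ Icc p q, M ≤ u ^ (β - 1)) :
    β * ((q - p) * M) ≤ q ^ β - p ^ β := by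
  have h1 : ∫ u in p..q, u ^ (β - 1) = (q ^ β - p ^ β) / β := by
    rw [integral_rpow (Or.inl (by linarith))]
    norm_num
  have h2 : ∫ _u in p..q, M ≤ ∫ u in p..q, u ^ (β - 1) :=
    intervalIntegral.integral_mono_on hpq intervalIntegrable_const
      (intervalIntegral.intervalIntegrable_rpow' (by linarith)) hM
  rw [intervalIntegral.integral_const, smul_eq_mul] at h2
  rw [h1, le_div_iff₀ hβ] at h2
  linarith [h2]

lemma mass_nonneg {β t s : ℝ} (hβ : 0 < β) (ht : 0 ≤ t) (hs : 0 ≤ s) : 0 ≤ mass β t s := by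
  have h : max (t - s) 0 ≤ t + s := by
    apply max_le (by linarith) (by linarith)
  have := Real.rpow_le_rpow (le_max_right _ 0) h hβ.le
  simp only [mass]; linarith

lemma mass_mono {β t s s' : ℝ} (hβ : 0 < β) (ht : 0 ≤ t) (hs : 0 ≤ s) (hss' : s ≤ s') :
    mass β t s ≤ mass β t s' := by
  have h1 : (t + s) ^ β ≤ (t + s') ^ β :=
    Real.rpow_le_rpow (by linarith) (by linarith) hβ.le
  have h2 : max (t - s') 0 ^ β ≤ max (t - s) 0 ^ β :=
    Real.rpow_le_rpow (le_max_right _ 0) (max_le_max (by linarith) le_rfl) hβ.le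
  simp only [mass]; linarith

lemma mass_double {β : ℝ} (hβ : 0 < β) :
    ∃ K : ℝ, 1 ≤ K ∧ ∀ t s : ℝ, 0 < t → 0 < s → mass β t (2 * s) ≤ K * mass β t s := by
  have h35 : ((3:ℝ)/5) ^ β < 1 := Real.rpow_lt_one (by norm_num) (by norm_num) hβ
  have h35' : (0:ℝ) < 1 - (3/5) ^ β := by linarith
  set K₁ : ℝ := 6 ^ β / (1 - (3/5) ^ β) with hK₁def
  have hK₁pos : 0 < K₁ := div_pos (Real.rpow_pos_of_pos (by norm_num) β) h35'
  refine ⟨max K₁ (2 ^ β + 5), le_trans ?_ (le_max_right _ _), ?_⟩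
  · have : (0:ℝ) ≤ 2 ^ β := Real.rpow_nonneg (by norm_num) β
    linarith
  intro t s ht hs
  have hmass1 : 0 ≤ mass β t s := mass_nonneg hβ ht.le hs.le
  rcases le_or_gt t (4 * s) with hcase | hcase
  · -- t ≤ 4s
    have hub : mass β t (2 * s) ≤ 6 ^ β * s ^ β := by
      have h1 : max (t - 2 * s) 0 ^ β ≥ 0 := Real.rpow_nonneg (le_max_right _ _) β
      have h2 : (t + 2 * s) ^ β ≤ (6 * s) ^ β :=
        Real.rpow_le_rpow (by linarith) (by linarith) hβ.le
      have h3 : ((6:ℝ) * s) ^ β = 6 ^ β * s ^ β := Real.mul_rpow (by norm_num) hs.le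
      simp only [mass]; linarith [h2, h3 ▸ h2]
    have hlb : (1 - (3/5) ^ β) * s ^ β ≤ mass β t s := by
      have ha : max (t - s) 0 ≤ (3/5) * (t + s) := by
        rcases le_or_gt t s with h | h
        · refine max_le (by linarith) (by positivity)
        · refine max_le (by linarith) (by positivity)
      have h1 : max (t - s) 0 ^ β ≤ ((3/5) * (t + s)) ^ β :=
        Real.rpow_le_rpow (le_max_right _ _) ha hβ.le
      have h2 : ((3/5 : ℝ) * (t + s)) ^ β = (3/5) ^ β * (t + s) ^ β :=
        Real.mul_rpow (by norm_num) (by linarith)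
      have h3 : s ^ β ≤ (t + s) ^ β := Real.rpow_le_rpow hs.le (by linarith) hβ.le
      have h4 : (0:ℝ) ≤ (3/5 : ℝ) ^ β := Real.rpow_nonneg (by norm_num) β
      simp only [mass]
      nlinarith [h1, h2, h3]
    calc mass β t (2 * s) ≤ 6 ^ β * s ^ β := hub
      _ = K₁ * ((1 - (3/5) ^ β) * s ^ β) := by
          rw [← mul_assoc, hK₁def, div_mul_cancel₀ _ h35'.ne']
      _ ≤ K₁ * mass β t s := by
          exact mul_le_mul_of_nonneg_left hlb hK₁pos.le
      _ ≤ max K₁ (2 ^ β + 5) * mass β t s :=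
          mul_le_mul_of_nonneg_right (le_max_left _ _) hmass1
  · -- 4s < t
    have ht2s : 0 < t - 2 * s := by linarith
    have hts : 0 < t - s := by linarith
    have hm2 : mass β t (2 * s) = (t + 2 * s) ^ β - (t - 2 * s) ^ β := by
      simp only [mass]
      rw [max_eq_left ht2s.le]
    have hm1 : mass β t s = (t + s) ^ β - (t - s) ^ β := by
      simp only [mass]
      rw [max_eq_left hts.le]
    rcases le_or_gt 1 β with hβ1 | hβ1
    · -- β ≥ 1
      have hub : mass β t (2 * s) ≤ β * (4 * s * (t + 2 * s) ^ (β - 1)) := by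
        rw [hm2]
        have := rpow_sub_le (M := (t + 2 * s) ^ (β - 1)) hβ ht2s (show t - 2*s ≤ t + 2*s by linarith)
          (fun u hu => Real.rpow_le_rpow (by linarith [hu.1]) hu.2 (by linarith))
        calc (t + 2*s) ^ β - (t - 2*s) ^ β ≤ β * ((t + 2*s - (t - 2*s)) * (t + 2*s) ^ (β-1)) := this
          _ = β * (4 * s * (t + 2*s) ^ (β-1)) := by ring_nf
      have hlb : β * (2 * s * (t - s) ^ (β - 1)) ≤ mass β t s := by
        rw [hm1]
        have := le_rpow_sub (M := (t - s) ^ (β - 1)) hβ hts (show t - s ≤ t + s by linarith)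
          (fun u hu => Real.rpow_le_rpow hts.le hu.1 (by linarith))
        calc β * (2 * s * (t - s) ^ (β-1)) = β * ((t + s - (t - s)) * (t - s) ^ (β-1)) := by ring_nf
          _ ≤ (t + s) ^ β - (t - s) ^ β := this
      have hcomp : (t + 2 * s) ^ (β - 1) ≤ 2 ^ (β - 1) * (t - s) ^ (β - 1) := by
        have h1 : (t + 2 * s) ^ (β - 1) ≤ (2 * (t - s)) ^ (β - 1) :=
          Real.rpow_le_rpow (by linarith) (by linarith) (by linarith)
        rwa [Real.mul_rpow (by norm_num) hts.le] at h1
      have h2b : (0:ℝ) < 2 ^ (β - 1) := Real.rpow_pos_of_pos (by norm_num) _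
      have key : mass β t (2 * s) ≤ 2 ^ β * mass β t s := by
        have h2β : (2:ℝ) ^ β = 2 * 2 ^ (β - 1) := by
          rw [← Real.rpow_one_add' (by norm_num) (by intro h; linarith [h])]
          norm_num
        calc mass β t (2 * s) ≤ β * (4 * s * (t + 2 * s) ^ (β - 1)) := hub
          _ ≤ β * (4 * s * (2 ^ (β-1) * (t - s) ^ (β-1))) := by
              apply mul_le_mul_of_nonneg_left _ hβ.le
              apply mul_le_mul_of_nonneg_left hcomp (by linarith)
          _ = 2 ^ β * (β * (2 * s * (t - s) ^ (β-1))) := by rw [h2β]; ring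
          _ ≤ 2 ^ β * mass β t s := by
              apply mul_le_mul_of_nonneg_left hlb (by positivity)
      have h2β5 : (2:ℝ) ^ β ≤ max K₁ (2 ^ β + 5) := le_trans (by linarith) (le_max_right _ _)
      calc mass β t (2*s) ≤ 2 ^ β * mass β t s := key
        _ ≤ max K₁ (2 ^ β + 5) * mass β t s := mul_le_mul_of_nonneg_right h2β5 hmass1
    · -- β < 1
      have hub : mass β t (2 * s) ≤ β * (4 * s * (t - 2 * s) ^ (β - 1)) := by
        rw [hm2]
        have := rpow_sub_le (M := (t - 2 * s) ^ (β - 1)) hβ ht2s (show t - 2*s ≤ t + 2*s by linarith)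
          (fun u hu => Real.rpow_le_rpow_of_nonpos ht2s hu.1 (by linarith))
        calc (t + 2*s) ^ β - (t - 2*s) ^ β ≤ β * ((t + 2*s - (t - 2*s)) * (t - 2*s) ^ (β-1)) := this
          _ = β * (4 * s * (t - 2*s) ^ (β-1)) := by ring_nf
      have hlb : β * (2 * s * (t + s) ^ (β - 1)) ≤ mass β t s := by
        rw [hm1]
        have := le_rpow_sub (M := (t + s) ^ (β - 1)) hβ hts (show t - s ≤ t + s by linarith)
          (fun u hu => Real.rpow_le_rpow_of_nonpos (by linarith [hu.1]) hu.2 (by linarith))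
        calc β * (2 * s * (t + s) ^ (β-1)) = β * ((t + s - (t - s)) * (t + s) ^ (β-1)) := by ring_nf
          _ ≤ (t + s) ^ β - (t - s) ^ β := this
      have hcomp : (t - 2 * s) ^ (β - 1) ≤ (5/2) * (t + s) ^ (β - 1) := by
        have hX : t + s ≤ (5/2) * (t - 2*s) := by linarith
        have h1 : ((5/2 : ℝ) * (t - 2*s)) ^ (β - 1) ≤ (t + s) ^ (β - 1) :=
          Real.rpow_le_rpow_of_nonpos (by linarith) hX (by linarith)
        rw [Real.mul_rpow (by norm_num) ht2s.le] at h1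
        have h2 : (0:ℝ) < (5/2 : ℝ) ^ (β - 1) := Real.rpow_pos_of_pos (by norm_num) _
        have h3 : (t - 2*s) ^ (β - 1) ≤ ((5/2 : ℝ) ^ (β - 1))⁻¹ * (t + s) ^ (β - 1) := by
          have h3' := mul_le_mul_of_nonneg_left h1 (inv_nonneg.2 h2.le)
          rwa [← mul_assoc, inv_mul_cancel₀ h2.ne', one_mul] at h3'
        have h4 : ((5/2:ℝ) ^ (β - 1))⁻¹ = (5/2:ℝ) ^ (1 - β) := by
          rw [← Real.rpow_neg (by norm_num)]; norm_num
        have h5 : (5/2:ℝ) ^ (1 - β) ≤ (5/2:ℝ) ^ (1:ℝ) :=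
          Real.rpow_le_rpow_of_exponent_le (by norm_num) (by linarith)
        have h6 : (5/2:ℝ) ^ (1:ℝ) = 5/2 := Real.rpow_one _
        have h7 : (0:ℝ) ≤ (t + s) ^ (β - 1) := Real.rpow_nonneg (by linarith) _
        calc (t - 2*s) ^ (β-1) ≤ ((5/2:ℝ)^(β-1))⁻¹ * (t+s)^(β-1) := h3
          _ = (5/2:ℝ)^(1-β) * (t+s)^(β-1) := by rw [h4]
          _ ≤ (5/2) * (t+s)^(β-1) := by nlinarith [h5, h6 ▸ h5]
      have key : mass β t (2 * s) ≤ 5 * mass β t s := by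
        calc mass β t (2 * s) ≤ β * (4 * s * (t - 2 * s) ^ (β - 1)) := hub
          _ ≤ β * (4 * s * ((5/2) * (t + s) ^ (β - 1))) := by
              apply mul_le_mul_of_nonneg_left _ hβ.le
              apply mul_le_mul_of_nonneg_left hcomp (by linarith)
          _ = 5 * (β * (2 * s * (t + s) ^ (β-1))) := by ring
          _ ≤ 5 * mass β t s := by linarith [hlb]
      have h5K : (5:ℝ) ≤ max K₁ (2 ^ β + 5) := by
        have : (0:ℝ) ≤ 2 ^ β := Real.rpow_nonneg (by norm_num) β
        exact le_trans (by linarith) (le_max_right _ _)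
      calc mass β t (2*s) ≤ 5 * mass β t s := key
        _ ≤ max K₁ (2 ^ β + 5) * mass β t s := mul_le_mul_of_nonneg_right h5K hmass1

lemma mass_scale {β A : ℝ} (hβ : 0 < β) (hA : 1 ≤ A) :
    ∃ C : ℝ, 0 < C ∧ ∀ t s : ℝ, 0 < t → 0 < s → mass β t (A * s) ≤ C * mass β t s := by
  obtain ⟨K, hK1, hK⟩ := mass_double hβ
  obtain ⟨n, hn⟩ := pow_unbounded_of_one_lt A (by norm_num : (1:ℝ) < 2)
  refine ⟨K ^ n, pow_pos (by linarith) n, fun t s ht hs => ?_⟩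
  have hiter : ∀ m, mass β t (2 ^ m * s) ≤ K ^ m * mass β t s := by
    intro m; induction m with
    | zero => simp
    | succ m ih =>
      have h1 : (2:ℝ) ^ (m+1) * s = 2 * (2 ^ m * s) := by ring
      rw [h1]
      calc mass β t (2 * (2 ^ m * s)) ≤ K * mass β t (2 ^ m * s) := hK t _ ht (by positivity)
        _ ≤ K * (K ^ m * mass β t s) := mul_le_mul_of_nonneg_left ih (by linarith)
        _ = K ^ (m+1) * mass β t s := by ring
  calc mass β t (A * s) ≤ mass β t (2 ^ n * s) :=
        mass_mono hβ ht.le (by positivity) (mul_le_mul_of_nonneg_right hn.le hs.le)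
    _ ≤ K ^ n * mass β t s := hiter n

lemma J_eq {c : ℝ} (hc : -1 < c) {t s : ℝ} (ht : 0 < t) (hs : 0 < s) :
    ∫ u in Ioo (max (t - s) 0) (t + s), u ^ c = mass (c + 1) t s / (c + 1) := by
  have ha : (0:ℝ) ≤ max (t - s) 0 := le_max_right _ _
  have hab : max (t - s) 0 ≤ t + s := max_le (by linarith) (by linarith)
  rw [← integral_Ioc_eq_integral_Ioo, ← intervalIntegral.integral_of_le hab,
    integral_rpow (Or.inl hc)]
  rfl

lemma J_nonneg {c a b : ℝ} (ha : 0 ≤ a) : 0 ≤ ∫ u in Ioo a b, u ^ c :=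
  setIntegral_nonneg measurableSet_Ioo fun u hu => Real.rpow_nonneg (le_trans ha hu.1.le) c

lemma oneD {c : ℝ} (hc : -1 < c) {A : ℝ} (hA : 1 ≤ A) :
    ∃ C : ℝ, 0 < C ∧ ∀ t s : ℝ, 0 < t → 0 < s →
      ∫ u in Ioo (max (t - A * s) 0) (t + A * s), u ^ c ≤
        C * ∫ u in Ioo (max (t - s) 0) (t + s), u ^ c := by
  have hβ : 0 < c + 1 := by linarith
  obtain ⟨C, hC, h⟩ := mass_scale (β := c + 1) hβ hA
  refine ⟨C, hC, fun t s ht hs => ?_⟩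
  rw [J_eq hc ht (by positivity : (0:ℝ) < A * s), J_eq hc ht hs, ← mul_div_assoc]
  apply div_le_div_of_nonneg_right (h t s ht hs) hβ.le



lemma prod_indicator {t : Fin d → Set ℝ} (g : Fin d → ℝ → ℝ) (z : Fin d → ℝ) :
    ∏ i, (t i).indicator (g i) (z i) =
      (univ.pi t).indicator (fun z : Fin d → ℝ => ∏ i, g i (z i)) z := by
  by_cases h : z ∈ univ.pi t
  · rw [indicator_of_mem h]
    exact Finset.prod_congr rfl fun i _ => indicator_of_mem (h i (mem_univ i)) _
  · rw [indicator_of_notMem h]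
    have : ∃ i, z i ∉ t i := by simpa [Set.mem_pi] using h
    obtain ⟨i, hi⟩ := this
    exact Finset.prod_eq_zero (Finset.mem_univ i) (indicator_of_notMem hi _)

lemma bessel_cube (ν : Fin d → ℝ) (hν : ∀ i, -1 < ν i) (x : EuclideanSpace ℝ (Fin d))
    (hx : ∀ i, 0 < x i) (s : ℝ) (hs : 0 < s) :
    besselMeasureD d ν {y : EuclideanSpace ℝ (Fin d) | ∀ i, y i ∈ Ioo (x i - s) (x i + s)} =
      ENNReal.ofReal (∏ i, ∫ u in Ioo (max (x i - s) 0) (x i + s), u ^ (2 * ν i + 1)) := by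
  classical
  set cube : Set (EuclideanSpace ℝ (Fin d)) :=
    {y | ∀ i, y i ∈ Ioo (x i - s) (x i + s)} with hcubedef
  set cube' : Set (EuclideanSpace ℝ (Fin d)) :=
    {y | ∀ i, y i ∈ Ioo (max (x i - s) 0) (x i + s)} with hcube'def
  set box : Set (Fin d → ℝ) := univ.pi fun i => Ioo (max (x i - s) 0) (x i + s) with hboxdef
  have hcube : MeasurableSet cube := by
    have : cube = ⋂ i, (fun y : EuclideanSpace ℝ (Fin d) => y i) ⁻¹' Ioo (x i - s) (x i + s) := by
      ext y; simp [hcubedef]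
    rw [this]
    exact MeasurableSet.iInter fun i => ((measurable_pi_apply i).comp (WithLp.measurable_ofLp 2 _)) measurableSet_Ioo
  have hcube' : MeasurableSet cube' := by
    have : cube' = ⋂ i,
        (fun y : EuclideanSpace ℝ (Fin d) => y i) ⁻¹' Ioo (max (x i - s) 0) (x i + s) := by
      ext y; simp [hcube'def]
    rw [this]
    exact MeasurableSet.iInter fun i => ((measurable_pi_apply i).comp (WithLp.measurable_ofLp 2 _)) measurableSet_Ioo
  have hbox : MeasurableSet box := MeasurableSet.univ_pi fun i => measurableSet_Ioo
  have hDm : Measurable (fun y : EuclideanSpace ℝ (Fin d) =>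
      ENNReal.ofReal (∏ i, (y i) ^ (2 * ν i + 1))) := by
    apply ENNReal.measurable_ofReal.comp
    apply Finset.measurable_prod
    intro i _
    have h1 : Measurable fun u : ℝ => u ^ (2 * ν i + 1) := by measurability
    exact h1.comp ((measurable_pi_apply i).comp (WithLp.measurable_ofLp 2 _))
  have hco : cube ∩ {y : EuclideanSpace ℝ (Fin d) | ∀ i, 0 < y i} = cube' := by
    ext y
    simp only [hcubedef, hcube'def, Set.mem_inter_iff, Set.mem_setOf_eq, Set.mem_Ioo, max_lt_iff]
    constructor
    · rintro ⟨h1, h2⟩ i; exact ⟨⟨(h1 i).1, h2 i⟩, (h1 i).2⟩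
    · intro h; exact ⟨fun i => ⟨(h i).1.1, (h i).2⟩, fun i => (h i).1.2⟩
  rw [besselMeasureD, withDensity_apply _ hcube, Measure.restrict_restrict hcube, hco]
  have hvol : (volume : Measure (EuclideanSpace ℝ (Fin d))) =
      Measure.map (MeasurableEquiv.toLp 2 (Fin d → ℝ)) volume :=
    ((EuclideanSpace.volume_preserving_symm_measurableEquiv_toLp (Fin d)).symm).map_eq.symm
  rw [hvol, setLIntegral_map hcube' hDm (MeasurableEquiv.measurable _)]
  have hpre : (MeasurableEquiv.toLp 2 (Fin d → ℝ)) ⁻¹' cube' = box := by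
    ext z
    simp only [hcube'def, hboxdef, Set.mem_preimage, Set.mem_setOf_eq, Set.mem_univ_pi]
    rfl
  rw [hpre]
  have happ : ∀ z : Fin d → ℝ,
      (fun y : EuclideanSpace ℝ (Fin d) => ENNReal.ofReal (∏ i, (y i) ^ (2 * ν i + 1)))
        ((MeasurableEquiv.toLp 2 (Fin d → ℝ)) z)
      = ENNReal.ofReal (∏ i, (z i) ^ (2 * ν i + 1)) := fun z => rfl
  simp only [happ]
  -- integrability of each 1D piece
  have hIoo : ∀ i, IntegrableOn (fun u : ℝ => u ^ (2 * ν i + 1))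
      (Ioo (max (x i - s) 0) (x i + s)) := by
    intro i
    have hle : max (x i - s) 0 ≤ x i + s := max_le (by linarith [hx i]) (by linarith [hx i])
    have h1 : IntervalIntegrable (fun u : ℝ => u ^ (2 * ν i + 1)) volume
        (max (x i - s) 0) (x i + s) :=
      intervalIntegral.intervalIntegrable_rpow' (by linarith [hν i])
    rwa [intervalIntegrable_iff_integrableOn_Ioo_of_le hle] at h1
  have hprod : Integrable (fun z : Fin d → ℝ =>
      ∏ i, (Ioo (max (x i - s) 0) (x i + s)).indicator (fun u => u ^ (2 * ν i + 1)) (z i)) := by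
    exact Integrable.fintype_prod (𝕜 := ℝ)
      (f := fun i => (Ioo (max (x i - s) 0) (x i + s)).indicator (fun u => u ^ (2 * ν i + 1)))
      (fun i => (integrable_indicator_iff measurableSet_Ioo).2 (hIoo i))
  have hprodeq : (fun z : Fin d → ℝ =>
      ∏ i, (Ioo (max (x i - s) 0) (x i + s)).indicator (fun u => u ^ (2 * ν i + 1)) (z i)) =
      box.indicator (fun z : Fin d → ℝ => ∏ i, (z i) ^ (2 * ν i + 1)) := by
    funext z; exact prod_indicator _ z
  have hint : IntegrableOn (fun z : Fin d → ℝ => ∏ i, (z i) ^ (2 * ν i + 1)) box := by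
    exact (integrable_indicator_iff hbox).1 (hprodeq ▸ hprod)
  have hnonneg : 0 ≤ᵐ[volume.restrict box] fun z : Fin d → ℝ => ∏ i, (z i) ^ (2 * ν i + 1) := by
    refine ae_restrict_of_forall_mem hbox fun z hz => ?_
    refine Finset.prod_nonneg fun i _ => Real.rpow_nonneg ?_ _
    have := hz i (mem_univ i)
    have h0 : (0:ℝ) ≤ max (x i - s) 0 := le_max_right _ _
    exact le_trans h0 this.1.le
  rw [← ofReal_integral_eq_lintegral_ofReal hint hnonneg]
  congr 1
  rw [← integral_indicator hbox, ← hprodeq]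
  rw [integral_fintype_prod_volume_eq_prod (ι := Fin d)
    (f := fun i => (Ioo (max (x i - s) 0) (x i + s)).indicator (fun u => u ^ (2 * ν i + 1)))]
  exact Finset.prod_congr rfl fun i _ => integral_indicator measurableSet_Ioo

lemma ball_subset_cube (x : EuclideanSpace ℝ (Fin d)) (R : ℝ) :
    Metric.ball x R ⊆ {y : EuclideanSpace ℝ (Fin d) | ∀ i, y i ∈ Ioo (x i - R) (x i + R)} := by
  intro y hy
  rw [Metric.mem_ball] at hy
  intro i
  have h1 : dist (y i) (x i) ≤ dist y x := by
    rw [EuclideanSpace.dist_eq]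
    have h2 : dist (y i) (x i) ^ 2 ≤ ∑ j, dist (y j) (x j) ^ 2 :=
      Finset.single_le_sum (f := fun j => dist (y j) (x j) ^ 2)
        (fun j _ => sq_nonneg _) (Finset.mem_univ i)
    calc dist (y i) (x i) = Real.sqrt (dist (y i) (x i) ^ 2) := (Real.sqrt_sq dist_nonneg).symm
      _ ≤ Real.sqrt (∑ j, dist (y j) (x j) ^ 2) := Real.sqrt_le_sqrt h2
  have h3 : |y i - x i| < R := by
    rw [← Real.dist_eq]; exact lt_of_le_of_lt h1 hy
  rw [abs_lt] at h3
  exact ⟨by linarith [h3.1], by linarith [h3.2]⟩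

lemma cube_subset_ball (hd : 0 < d) (x : EuclideanSpace ℝ (Fin d)) {r : ℝ} (hr : 0 < r) :
    {y : EuclideanSpace ℝ (Fin d) | ∀ i, y i ∈ Ioo (x i - r / Real.sqrt d) (x i + r / Real.sqrt d)}
      ⊆ Metric.ball x r := by
  intro y hy
  have hsd : (0:ℝ) < Real.sqrt d := Real.sqrt_pos.2 (by exact_mod_cast hd)
  have hs' : (0:ℝ) < r / Real.sqrt d := div_pos hr hsd
  rw [Metric.mem_ball, EuclideanSpace.dist_eq]
  have hterm : ∀ i : Fin d, dist (y i) (x i) ^ 2 < (r / Real.sqrt d) ^ 2 := by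
    intro i
    have h := hy i
    rw [Real.dist_eq, sq_abs]
    exact sq_lt_sq' (by linarith [h.1]) (by linarith [h.2])
  have hsum : ∑ i, dist (y i) (x i) ^ 2 < r ^ 2 := by
    haveI : Nonempty (Fin d) := Fin.pos_iff_nonempty.1 hd
    have hne : (Finset.univ : Finset (Fin d)).Nonempty := Finset.univ_nonempty
    calc ∑ i, dist (y i) (x i) ^ 2 < ∑ _i : Fin d, (r / Real.sqrt d) ^ 2 :=
          Finset.sum_lt_sum_of_nonempty hne fun i _ => hterm i
      _ = d * (r / Real.sqrt d) ^ 2 := by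
          rw [Finset.sum_const, Finset.card_univ, Fintype.card_fin, nsmul_eq_mul]
      _ = r ^ 2 := by
          rw [div_pow, Real.sq_sqrt (by positivity : (0:ℝ) ≤ (d:ℝ))]
          field_simp
  calc Real.sqrt (∑ i, dist (y i) (x i) ^ 2) < Real.sqrt (r ^ 2) := by
        apply Real.sqrt_lt_sqrt (Finset.sum_nonneg fun i _ => sq_nonneg _) hsum
    _ = r := Real.sqrt_sq hr.le


end BesselDoubling

open BesselDoubling

theorem besselMeasureD_doubling (d : ℕ) (ν : Fin d → ℝ) (hν : ∀ i, -1 < ν i) :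
    ∃ C : ℝ, 0 < C ∧ ∀ (x : EuclideanSpace ℝ (Fin d)) (r : ℝ),
      (∀ i, 0 < x i) → 0 < r →
      besselMeasureD d ν (Metric.ball x (2 * r)) ≤
        ENNReal.ofReal C * besselMeasureD d ν (Metric.ball x r) := by
  rcases Nat.eq_zero_or_pos d with hd | hd
  · subst hd
    refine ⟨1, one_pos, fun x r _ hr => ?_⟩
    have hball : ∀ R : ℝ, 0 < R → Metric.ball x R = (univ : Set (EuclideanSpace ℝ (Fin 0))) := by
      intro R hR
      apply eq_univ_of_forall
      intro y
      rw [Metric.mem_ball]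
      have : y = x := Subsingleton.elim y x
      rw [this, dist_self]; exact hR
    rw [hball _ (by linarith), hball _ hr, ENNReal.ofReal_one, one_mul]
  · have hsd : (0:ℝ) < Real.sqrt d := Real.sqrt_pos.2 (by exact_mod_cast hd)
    have hsd1 : (1:ℝ) ≤ Real.sqrt d := by
      rw [show (1:ℝ) = Real.sqrt 1 from (Real.sqrt_one).symm]
      exact Real.sqrt_le_sqrt (by exact_mod_cast hd)
    set A : ℝ := 2 * Real.sqrt d with hAdef
    have hA : 1 ≤ A := by simp only [hAdef]; linarith
    have h1 : ∀ i : Fin d, ∃ C : ℝ, 0 < C ∧ ∀ t s : ℝ, 0 < t → 0 < s →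
        ∫ u in Ioo (max (t - A * s) 0) (t + A * s), u ^ (2 * ν i + 1) ≤
          C * ∫ u in Ioo (max (t - s) 0) (t + s), u ^ (2 * ν i + 1) :=
      fun i => oneD (by linarith [hν i]) hA
    choose C hCpos hC using h1
    refine ⟨∏ i, C i, Finset.prod_pos fun i _ => hCpos i, fun x r hx hr => ?_⟩
    set s' : ℝ := r / Real.sqrt d with hs'def
    have hs' : 0 < s' := div_pos hr hsd
    have h2r : A * s' = 2 * r := by
      simp only [hAdef, hs'def]
      field_simp
    calc besselMeasureD d ν (Metric.ball x (2 * r))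
        ≤ besselMeasureD d ν {y : EuclideanSpace ℝ (Fin d) |
            ∀ i, y i ∈ Ioo (x i - 2 * r) (x i + 2 * r)} :=
          measure_mono (ball_subset_cube x (2 * r))
      _ = ENNReal.ofReal (∏ i, ∫ u in Ioo (max (x i - 2 * r) 0) (x i + 2 * r),
            u ^ (2 * ν i + 1)) := bessel_cube ν hν x hx (2 * r) (by linarith)
      _ ≤ ENNReal.ofReal ((∏ i, C i) * ∏ i, ∫ u in Ioo (max (x i - s') 0) (x i + s'),
            u ^ (2 * ν i + 1)) := by
          apply ENNReal.ofReal_le_ofReal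
          rw [← Finset.prod_mul_distrib]
          refine Finset.prod_le_prod (fun i _ => J_nonneg (le_max_right _ _)) fun i _ => ?_
          have h := hC i (x i) s' (hx i) hs'
          rwa [h2r] at h
      _ = ENNReal.ofReal (∏ i, C i) * ENNReal.ofReal (∏ i, ∫ u in
            Ioo (max (x i - s') 0) (x i + s'), u ^ (2 * ν i + 1)) :=
          ENNReal.ofReal_mul (Finset.prod_nonneg fun i _ => (hCpos i).le)
      _ = ENNReal.ofReal (∏ i, C i) * besselMeasureD d ν {y : EuclideanSpace ℝ (Fin d) |
            ∀ i, y i ∈ Ioo (x i - s') (x i + s')} := by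
          rw [bessel_cube ν hν x hx s' hs']
      _ ≤ ENNReal.ofReal (∏ i, C i) * besselMeasureD d ν (Metric.ball x r) := by
          apply mul_le_mul_right
          exact measure_mono (cube_subset_ball hd x hr)
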